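/- arXiv:math/9805146 — 2 statements merged into one kernel-verified Lean document; each statement's English description precedes it below -/
import Mathlib

section
/- Let K be an abstract elementary class with amalgamation in λ. For every (M₀, M₁, a) ∈ K³_λ there is a reduced triple (M₀', M₁', a) ∈ K³_λ with (M₀, M₁, a) ≤ (M₀', M₁', a). -/
universe u

open Cardinal Set

/-- `i` is a limit index of a linear order: there is an index below it,
but no largest index below it. -/
def IsChainLimit {ι : Type*} [LT ι] (i : ι) : Prop :=
  (∃ j, j < i) ∧ ∀ j, j < i → ∃ k, j < k ∧ k < i

/-- An abstract elementary class, presented concretely: the models of `K` are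
(carriers of `τ`-structures on) subsets of a fixed universe `U`.  `mem M` says
that `M` is (the carrier of) a model of `K`, `le M N` is the strong substructure
relation `M ≤_K N` (which refines `⊆`), and `iso f M N` says that the function
`f` restricted to `M` is an isomorphism from the model `M` onto the model `N`.
The fields are the axioms of an abstract elementary class: closure under
isomorphism (Ax 0), reflexivity and transitivity of `≤_K` (Ax I, II), the two
axioms about unions of `≤_K`-increasing continuous chains (Ax III, IV),
coherence (Ax V) and the Löwenheim–Skolem axiom (Ax VI). -/
structure AEC (U : Type u) : Type (u + 1) where
  mem : Set U → Prop
  le : Set U → Set U → Prop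
  iso : (U → U) → Set U → Set U → Prop
  LS : Cardinal.{u}
  aleph0_le_LS : ℵ₀ ≤ LS
  le_mem_left : ∀ {M N}, le M N → mem M
  le_mem_right : ∀ {M N}, le M N → mem N
  subset_of_le : ∀ {M N}, le M N → M ⊆ N
  le_refl : ∀ {M}, mem M → le M M
  le_trans : ∀ {M N P}, le M N → le N P → le M P
  coherence : ∀ {M₀ M₁ N}, le M₀ N → le M₁ N → M₀ ⊆ M₁ → le M₀ M₁
  chain_union_mem :
    ∀ {ι : Type u} [LinearOrder ι] [WellFoundedLT ι] (M : ι → Set U),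
      Nonempty ι → (∀ i j, i ≤ j → le (M i) (M j)) →
      (∀ i, IsChainLimit i → M i = ⋃ j ∈ Set.Iio i, M j) →
      mem (⋃ i, M i)
  chain_le_union :
    ∀ {ι : Type u} [LinearOrder ι] [WellFoundedLT ι] (M : ι → Set U),
      (∀ i j, i ≤ j → le (M i) (M j)) →
      (∀ i, IsChainLimit i → M i = ⋃ j ∈ Set.Iio i, M j) →
      ∀ i, le (M i) (⋃ j, M j)
  chain_union_le :
    ∀ {ι : Type u} [LinearOrder ι] [WellFoundedLT ι] (M : ι → Set U) (N : Set U),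
      Nonempty ι → (∀ i j, i ≤ j → le (M i) (M j)) →
      (∀ i, IsChainLimit i → M i = ⋃ j ∈ Set.Iio i, M j) →
      (∀ i, le (M i) N) → le (⋃ i, M i) N
  exists_le_of_subset :
    ∀ {N : Set U}, mem N → ∀ A : Set U, A ⊆ N → #A ≤ LS →
      ∃ M, le M N ∧ A ⊆ M ∧ #M ≤ LS
  iso_injOn : ∀ {f M N}, iso f M N → Set.InjOn f M
  iso_image : ∀ {f M N}, iso f M N → f '' M = N
  iso_id : ∀ {M}, mem M → iso id M M
  iso_mem : ∀ {f M N}, iso f M N → mem M → mem N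
  iso_symm : ∀ {f M N}, iso f M N → ∃ g, iso g N M ∧ ∀ x ∈ M, g (f x) = x
  iso_comp : ∀ {f g M N P}, iso f M N → iso g N P → iso (g ∘ f) M P
  iso_le : ∀ {f M₀ M₁ N₁}, iso f M₁ N₁ → le M₀ M₁ → le (f '' M₀) N₁
  iso_restrict : ∀ {f M₀ M₁ N₁}, iso f M₁ N₁ → le M₀ M₁ → iso f M₀ (f '' M₀)

namespace AEC

variable {U : Type u} (C : AEC U)

/-- `K_lam`: the models of `K` of cardinality `lam`. -/
def Kcard (lam : Cardinal.{u}) : Set (Set U) := {M | C.mem M ∧ #M = lam}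

/-- `f` is a `≤_K`-embedding of `M` into `N`: `f` is an isomorphism from `M`
onto its image, which is a `≤_K`-submodel of `N`. -/
def Emb (f : U → U) (M N : Set U) : Prop :=
  C.iso f M (f '' M) ∧ C.le (f '' M) N

/-- `K` is categorical in `lam`: `I(lam, K) = 1`, i.e. there is exactly one
model of cardinality `lam` up to isomorphism. -/
def Categorical (lam : Cardinal.{u}) : Prop :=
  (C.Kcard lam).Nonempty ∧
    ∀ M ∈ C.Kcard lam, ∀ N ∈ C.Kcard lam, ∃ f, C.iso f M N

/-- `M₀` is an amalgamation base (Definition 0.12(5)). -/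
def AmalgBase (M₀ : Set U) : Prop :=
  C.mem M₀ ∧ ∀ M₁ M₂ f₁ f₂, M₁ ∈ C.Kcard #M₀ → M₂ ∈ C.Kcard #M₀ →
    C.Emb f₁ M₀ M₁ → C.Emb f₂ M₀ M₂ →
    ∃ M₃ g₁ g₂, M₃ ∈ C.Kcard #M₀ ∧ C.Emb g₁ M₁ M₃ ∧ C.Emb g₂ M₂ M₃ ∧
      ∀ x ∈ M₀, g₁ (f₁ x) = g₂ (f₂ x)

/-- `K` has amalgamation in `lam`. -/
def Amalg (lam : Cardinal.{u}) : Prop := ∀ M₀ ∈ C.Kcard lam, C.AmalgBase M₀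

/-- `(M, N, a)` is a triple defining the type `tp(a, M, N)` over `M`:
`M ≤_K N ∈ K_{‖M‖}` and `a ∈ N`. -/
def TypeTriple (M N : Set U) (a : U) : Prop :=
  C.le M N ∧ N ∈ C.Kcard #M ∧ a ∈ N

/-- The atomic relation `E^at_M` of equality of types over `M`
(Definition 0.12(1)). -/
def EqAt (M N₁ : Set U) (a₁ : U) (N₂ : Set U) (a₂ : U) : Prop :=
  ∃ (N : Set U) (f₁ f₂ : U → U), N ∈ C.Kcard #M ∧
    C.Emb f₁ N₁ N ∧ C.Emb f₂ N₂ N ∧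
    (∀ x ∈ M, f₁ x = x) ∧ (∀ x ∈ M, f₂ x = x) ∧ f₁ a₁ = f₂ a₂

/-- `E_M`, the transitive closure of `E^at_M` on type triples; two triples are
`E_M`-related iff they define the same type over `M`. -/
def EqType (M : Set U) : Set U × U → Set U × U → Prop :=
  Relation.TransGen (fun p q : Set U × U =>
    C.TypeTriple M p.1 p.2 ∧ C.TypeTriple M q.1 q.2 ∧ C.EqAt M p.1 p.2 q.1 q.2)

/-- `a` realizes the type `tp(b, M, N₀)` in `N` (Definition 0.12(3)). -/
def Realizes (M N : Set U) (a : U) (N₀ : Set U) (b : U) : Prop :=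
  ∃ N', C.le M N' ∧ C.le N' N ∧ N' ∈ C.Kcard #M ∧ a ∈ N' ∧
    C.EqType M (N', a) (N₀, b)

/-- `a` strongly realizes `(M, N₀, b)/E^at_M` in `N` (Definition 0.12(4)). -/
def StronglyRealizes (M N : Set U) (a : U) (N₀ : Set U) (b : U) : Prop :=
  ∃ N', C.le M N' ∧ C.le N' N ∧ N' ∈ C.Kcard #M ∧ a ∈ N' ∧
    C.EqAt M N' a N₀ b

/-- `tp(a₀, M₀, N₀) ≤ tp(a₁, M₁, N₁)`: the type over `M₀` is the restriction
to `M₀` of the type over `M₁` (Definition 0.16(6)). -/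
def TypeLE (M₀ N₀ : Set U) (a₀ : U) (M₁ N₁ : Set U) (a₁ : U) : Prop :=
  C.le M₀ M₁ ∧ ∃ N a, C.mem N ∧ C.le M₁ N ∧ a ∈ N ∧
    C.Realizes M₀ N a N₀ a₀ ∧ C.Realizes M₁ N a N₁ a₁

/-- The number of types over `M`, i.e. `|S(M)|`. -/
def typeCount (M : Set U) : Cardinal.{u} :=
  #(Quot fun p q : {x : Set U × U // C.TypeTriple M x.1 x.2} =>
      C.EqType M p.1 q.1)

/-- `K` is stable in `lam`: `|S(M)| ≤ lam` for every `M ∈ K_lam`. -/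
def StableIn (lam : Cardinal.{u}) : Prop :=
  ∀ M ∈ C.Kcard lam, C.typeCount M ≤ lam

/-- `N` is universal over `M` (Definition 0.16(2)). -/
def UniversalOver (N M : Set U) : Prop :=
  C.le M N ∧ ∀ N', C.le M N' → #N' ≤ #N →
    ∃ f, C.Emb f N' N ∧ ∀ x ∈ M, f x = x

/-- `N₁` is `(lam, κ)`-saturated over `N`: there is a `≤_K`-increasing
continuous chain of length `κ` from `N` to `N₁` each of whose successor steps
is a universal extension in `K_lam` (Definition 0.21). -/
def SaturatedOver (lam : Cardinal.{u}) (κ : Ordinal.{u}) (N₁ N : Set U) : Prop :=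
  ∃ Mc : Ordinal.{u} → Set U,
    Mc 0 = N ∧ Mc κ = N₁ ∧
    (∀ i j, i ≤ j → j ≤ κ → C.le (Mc i) (Mc j)) ∧
    (∀ i, i ≤ κ → Order.IsSuccLimit i → Mc i = ⋃ j ∈ Set.Iio i, Mc j) ∧
    ∀ i, i < κ → Mc (i + 1) ∈ C.Kcard lam ∧ C.UniversalOver (Mc (i + 1)) (Mc i)

/-- `(M₀, M₁, a) ∈ K³_lam` (Definition 2.3A(1)). -/
def K3 (lam : Cardinal.{u}) (M₀ M₁ : Set U) (a : U) : Prop :=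
  M₀ ∈ C.Kcard lam ∧ M₁ ∈ C.Kcard lam ∧ C.le M₀ M₁ ∧ a ∈ M₁ ∧ a ∉ M₀

/-- The extension property of a triple `(M₀, M₁, a) ∈ K³_lam`
(Definition 2.3A(3)). -/
def ExtProp (lam : Cardinal.{u}) (M₀ M₁ : Set U) (a : U) : Prop :=
  ∀ N₀ f, N₀ ∈ C.Kcard lam → C.Emb f M₀ N₀ →
    ∃ N₁ g, C.K3 lam N₀ N₁ (g a) ∧ C.Emb g M₁ N₁ ∧ ∀ x ∈ M₀, g x = f x

/-- `(M₀, M₁, a) ∈ K³_lam` is reduced (Definition 2.3B(2)). -/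
def Reduced (lam : Cardinal.{u}) (M₀ M₁ : Set U) (a : U) : Prop :=
  C.K3 lam M₀ M₁ a ∧ ∀ M₀' M₁', C.K3 lam M₀' M₁' a →
    C.le M₀ M₀' → C.le M₁ M₁' → M₀' ∩ M₁ = M₀

/-- `(M₀, M₁, a) ∈ K³_lam` is minimal (Definition 2.3B(1)). -/
def MinimalTriple (lam : Cardinal.{u}) (M₀ M₁ : Set U) (a : U) : Prop :=
  C.K3 lam M₀ M₁ a ∧
  ∀ M₀' N₁ N₂ h₁ h₂,
    C.K3 lam M₀' N₁ (h₁ a) → C.K3 lam M₀' N₂ (h₂ a) →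
    C.Emb h₁ M₀ M₀' → C.Emb h₁ M₁ N₁ →
    C.Emb h₂ M₀ M₀' → C.Emb h₂ M₁ N₂ →
    C.EqType M₀' (N₁, h₁ a) (N₂, h₂ a)

/-- The type `tp(a, M₀, N)` is minimal (Definition 2.3B(3)). -/
def MinimalType (lam : Cardinal.{u}) (M₀ N : Set U) (a : U) : Prop :=
  ∃ M₁ b, C.EqType M₀ (M₁, b) (N, a) ∧ C.MinimalTriple lam M₀ M₁ b

/-- The type `tp(a, M₀, N)` is reduced (Definition 2.3B(4)). -/
def ReducedType (lam : Cardinal.{u}) (M₀ N : Set U) (a : U) : Prop :=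
  ∃ M₁ b, C.EqType M₀ (M₁, b) (N, a) ∧ C.Reduced lam M₀ M₁ b

/-- The type `tp(a, M, N)` is algebraic: it is realized in `M` itself. -/
def Algebraic (M N : Set U) (a : U) : Prop := ∃ c, C.Realizes M M c N a

/-- The type `tp(a, M, N)` is inevitable (Definition 5.1). -/
def Inevitable (M N : Set U) (a : U) : Prop :=
  ∀ M', C.le M M' → M ≠ M' → ∃ c, C.Realizes M M' c N a

/-- `(M₀, M₁, M₂) ∈ K^uniq_lam`: any two disjoint amalgams of `M₁` and `M₂`
over `M₀` in `K_lam` are equivalent (Definition 6.1(1)). -/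
def Kuniq (lam : Cardinal.{u}) (M₀ M₁ M₂ : Set U) : Prop :=
  M₀ ∈ C.Kcard lam ∧ M₁ ∈ C.Kcard lam ∧ M₂ ∈ C.Kcard lam ∧
  C.le M₀ M₁ ∧ C.le M₀ M₂ ∧
  ∀ N₁ N₂ g₁₀ g₁₁ g₁₂ g₂₀ g₂₁ g₂₂,
    N₁ ∈ C.Kcard lam → N₂ ∈ C.Kcard lam →
    C.Emb g₁₀ M₀ N₁ → C.Emb g₁₁ M₁ N₁ → C.Emb g₁₂ M₂ N₁ →
    (∀ x ∈ M₀, g₁₁ x = g₁₀ x) → (∀ x ∈ M₀, g₁₂ x = g₁₀ x) →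
    g₁₁ '' M₁ ∩ g₁₂ '' M₂ = g₁₀ '' M₀ →
    C.Emb g₂₀ M₀ N₂ → C.Emb g₂₁ M₁ N₂ → C.Emb g₂₂ M₂ N₂ →
    (∀ x ∈ M₀, g₂₁ x = g₂₀ x) → (∀ x ∈ M₀, g₂₂ x = g₂₀ x) →
    g₂₁ '' M₁ ∩ g₂₂ '' M₂ = g₂₀ '' M₀ →
    ∃ N f₁ f₂, N ∈ C.Kcard lam ∧ C.Emb f₁ N₁ N ∧ C.Emb f₂ N₂ N ∧
      (∀ x ∈ M₀, f₁ (g₁₀ x) = f₂ (g₂₀ x)) ∧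
      (∀ x ∈ M₁, f₁ (g₁₁ x) = f₂ (g₂₁ x)) ∧
      (∀ x ∈ M₂, f₁ (g₁₂ x) = f₂ (g₂₂ x))

/-- `K_lam` has disjoint amalgamation. -/
def DisjAmalg (lam : Cardinal.{u}) : Prop :=
  ∀ M₀ M₁ M₂, M₀ ∈ C.Kcard lam → M₁ ∈ C.Kcard lam → M₂ ∈ C.Kcard lam →
    C.le M₀ M₁ → C.le M₀ M₂ →
    ∃ N f₁ f₂, N ∈ C.Kcard lam ∧ C.Emb f₁ M₁ N ∧ C.Emb f₂ M₂ N ∧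
      (∀ x ∈ M₀, f₁ x = f₂ x) ∧ f₁ '' M₁ ∩ f₂ '' M₂ = f₁ '' M₀

/-- `(M₀, M₂) ∈ K^{3,uq}_lam`: `M₀ <_K M₂` in `K_lam` and every triple
`(M₀, M₁, M₂)` has unique (disjoint) amalgamation (Definition 6.1(2)). -/
def K3uq (lam : Cardinal.{u}) (M₀ M₂ : Set U) : Prop :=
  M₀ ∈ C.Kcard lam ∧ M₂ ∈ C.Kcard lam ∧ C.le M₀ M₂ ∧ M₀ ≠ M₂ ∧
  ∀ M₁, M₁ ∈ C.Kcard lam → C.le M₀ M₁ → C.Kuniq lam M₀ M₁ M₂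

/-- `NF_{lam,(δ₁,δ₂,δ₃)}(N₀, N₁, N₂, N₃)`: `N₁, N₂` are saturated and smoothly
amalgamated in `N₃` over `N₀`, witnessed by continuous chains of copies of the
unique-amalgamation pair `(Ms, Ns)` (Definition 8.1). -/
def NFd (lam : Cardinal.{u}) (Ms Ns : Set U) (δ₁ δ₂ δ₃ : Ordinal.{u})
    (N₀ N₁ N₂ N₃ : Set U) : Prop :=
  N₀ ∈ C.Kcard lam ∧ N₁ ∈ C.Kcard lam ∧ N₂ ∈ C.Kcard lam ∧ N₃ ∈ C.Kcard lam ∧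
  C.le N₀ N₁ ∧ C.le N₀ N₂ ∧ C.le N₁ N₃ ∧ C.le N₂ N₃ ∧
  N₁ ∩ N₂ = N₀ ∧
  C.SaturatedOver lam δ₁.cof.ord N₁ N₀ ∧
  C.SaturatedOver lam δ₂.cof.ord N₂ N₀ ∧
  ∃ N1c N2c : Ordinal.{u} → Set U,
    N1c 0 = N₀ ∧ N1c (lam.ord * δ₁) = N₁ ∧ N2c 0 = N₂ ∧
    (∀ i j, i ≤ j → j ≤ lam.ord * δ₁ → C.le (N1c i) (N1c j)) ∧
    (∀ i j, i ≤ j → j ≤ lam.ord * δ₁ → C.le (N2c i) (N2c j)) ∧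
    (∀ i, i ≤ lam.ord * δ₁ → Order.IsSuccLimit i →
      (N1c i = ⋃ j ∈ Set.Iio i, N1c j) ∧ (N2c i = ⋃ j ∈ Set.Iio i, N2c j)) ∧
    (∀ i, i < lam.ord * δ₁ →
      ∃ f, C.iso f Ns (N1c (i + 1)) ∧ f '' Ms = N1c i) ∧
    (∀ i, i ≤ lam.ord * δ₁ → N2c i ∩ N₁ = N1c i) ∧
    C.SaturatedOver lam δ₃.cof.ord N₃ (N2c (lam.ord * δ₁))

/-- `NF_lam(N₀, N₁, N₂, N₃)`: `N₁, N₂` are smoothly amalgamated over `N₀`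
inside `N₃` (Definition 8.2). -/
def NF (lam : Cardinal.{u}) (Ms Ns : Set U) (N₀ N₁ N₂ N₃ : Set U) : Prop :=
  ∃ M₀ M₁ M₂ M₃ : Set U,
    C.NFd lam Ms Ns lam.ord lam.ord lam.ord M₀ M₁ M₂ M₃ ∧
    N₀ = M₀ ∧ C.le N₁ M₁ ∧ C.le N₂ M₂ ∧ C.le N₃ M₃ ∧
    C.SaturatedOver lam lam.ord.cof.ord M₁ N₀ ∧
    C.SaturatedOver lam lam.ord.cof.ord M₂ N₀

section ReducedHelpers

/-- The ordinal corresponding to an element of `o.ToType`. -/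
noncomputable def ordOf (o : Ordinal.{u}) (x : o.ToType) : Ordinal.{u} :=
  ((Ordinal.ToType.mk (o := o)).symm x : Ordinal)

lemma ordOf_lt (o : Ordinal.{u}) (x : o.ToType) : ordOf o x < o :=
  ((Ordinal.ToType.mk (o := o)).symm x).2

lemma ordOf_le_iff {o : Ordinal.{u}} {x y : o.ToType} : ordOf o x ≤ ordOf o y ↔ x ≤ y := by
  rw [ordOf, ordOf, Subtype.coe_le_coe, OrderIso.le_iff_le]

lemma ordOf_lt_iff {o : Ordinal.{u}} {x y : o.ToType} : ordOf o x < ordOf o y ↔ x < y := by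
  rw [ordOf, ordOf, Subtype.coe_lt_coe, OrderIso.lt_iff_lt]

lemma ordOf_surj {o γ : Ordinal.{u}} (hγ : γ < o) : ∃ x, ordOf o x = γ := by
  refine ⟨Ordinal.ToType.mk (o := o) ⟨γ, hγ⟩, ?_⟩
  rw [ordOf, OrderIso.symm_apply_apply]

lemma iUnion_ordOf {V : Type u} (o : Ordinal.{u}) (S : Ordinal.{u} → Set V) :
    ⋃ x : o.ToType, S (ordOf o x) = ⋃ γ, ⋃ _ : γ < o, S γ := by
  ext u
  simp only [Set.mem_iUnion]
  constructor
  · rintro ⟨x, hx⟩; exact ⟨ordOf o x, ordOf_lt o x, hx⟩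
  · rintro ⟨γ, hγ, hu⟩
    obtain ⟨x, rfl⟩ := ordOf_surj hγ
    exact ⟨x, hu⟩

lemma biUnion_ordOf {V : Type u} (o : Ordinal.{u}) (S : Ordinal.{u} → Set V) (x : o.ToType) :
    ⋃ j ∈ Set.Iio x, S (ordOf o j) = ⋃ γ, ⋃ _ : γ < ordOf o x, S γ := by
  ext u
  simp only [Set.mem_iUnion, Set.mem_Iio]
  constructor
  · rintro ⟨j, hj, hu⟩; exact ⟨ordOf o j, ordOf_lt_iff.2 hj, hu⟩
  · rintro ⟨γ, hγ, hu⟩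
    obtain ⟨y, rfl⟩ := ordOf_surj (hγ.trans (ordOf_lt o x))
    exact ⟨y, ordOf_lt_iff.1 hγ, hu⟩

lemma isLimit_ordOf {o : Ordinal.{u}} {x : o.ToType} (hx : IsChainLimit x) :
    Order.IsSuccLimit (ordOf o x) := by
  obtain ⟨⟨j, hj⟩, hbtw⟩ := hx
  rw [Ordinal.isSuccLimit_iff, Order.isSuccPrelimit_iff_succ_lt]
  constructor
  · exact ((zero_le (a := _)).trans_lt (ordOf_lt_iff.2 hj)).ne'
  · intro γ hγ
    obtain ⟨y, rfl⟩ := ordOf_surj (hγ.trans (ordOf_lt o x))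
    obtain ⟨k, hyk, hkx⟩ := hbtw y (ordOf_lt_iff.1 hγ)
    exact lt_of_le_of_lt (Order.succ_le_of_lt (ordOf_lt_iff.2 hyk)) (ordOf_lt_iff.2 hkx)

end ReducedHelpers

/-- Fact 2.4(1): if `K` has amalgamation in `lam`, then above every triple
`(M₀, M₁, a) ∈ K³_lam` there is a reduced triple `(M₀', M₁', a)`. -/
theorem exists_reduced_above (lam : Cardinal.{u}) (hAm : C.Amalg lam)
    (M₀ M₁ : Set U) (a : U) (h : C.K3 lam M₀ M₁ a) :
    ∃ M₀' M₁', C.le M₀ M₀' ∧ C.le M₁ M₁' ∧ C.Reduced lam M₀' M₁' a := by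
  classical
  by_cases hfin : lam < ℵ₀
  · -- finite case: the triple is already reduced
    refine ⟨M₀, M₁, C.le_refl h.1.1, C.le_refl h.2.1.1, h, ?_⟩
    intro N₀ N₁ hk hle0 hle1
    have hsub : M₀ ⊆ N₀ := C.subset_of_le hle0
    have hfin0 : N₀.Finite := by
      rw [← Cardinal.lt_aleph0_iff_set_finite, hk.1.2]; exact hfin
    have hcard : N₀.ncard ≤ M₀.ncard := by
      rw [← Nat.card_coe_set_eq, ← Nat.card_coe_set_eq, Nat.card, Nat.card,
        h.1.2, hk.1.2]
    have heq : M₀ = N₀ := Set.eq_of_subset_of_ncard_le hsub hcard hfin0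
    rw [← heq]
    exact Set.inter_eq_self_of_subset_left (C.subset_of_le h.2.2.1)
  · push_neg at hfin
    by_contra hcon
    -- `Good p` : `p` is a K3-triple (with the fixed `a`) extending `(M₀, M₁)`
    set Good : Set U × Set U → Prop :=
      fun p => C.K3 lam p.1 p.2 a ∧ C.le M₀ p.1 ∧ C.le M₁ p.2 with hGood
    have hnored : ∀ p : Set U × Set U, Good p → ∃ q : Set U × Set U,
        C.K3 lam q.1 q.2 a ∧ C.le p.1 q.1 ∧ C.le p.2 q.2 ∧ q.1 ∩ p.2 ≠ p.1 := by
      rintro ⟨N₀, N₁⟩ ⟨hk, h0, h1⟩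
      have hnr : ¬ C.Reduced lam N₀ N₁ a := fun hr => hcon ⟨N₀, N₁, h0, h1, hr⟩
      rw [Reduced] at hnr
      push_neg at hnr
      obtain ⟨P₀, P₁, hP, hl0, hl1, hne⟩ := hnr hk
      exact ⟨(P₀, P₁), hP, hl0, hl1, hne⟩
    have hstep' : ∀ p : Set U × Set U, ∃ q : Set U × Set U, Good p →
        C.K3 lam q.1 q.2 a ∧ C.le p.1 q.1 ∧ C.le p.2 q.2 ∧ q.1 ∩ p.2 ≠ p.1 := by
      intro p
      by_cases hp : Good p
      · obtain ⟨q, hq⟩ := hnored p hp; exact ⟨q, fun _ => hq⟩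
      · exact ⟨p, fun hg => absurd hg hp⟩
    choose step hstep using hstep'
    -- the transfinite chain
    set Mseq : Ordinal.{u} → Set U × Set U := fun o =>
      Ordinal.limitRecOn o (M₀, M₁) (fun _ ih => step ih)
        (fun o _ ih => (⋃ γ, ⋃ hγ : γ < o, (ih γ hγ).1, ⋃ γ, ⋃ hγ : γ < o, (ih γ hγ).2))
      with hMseq
    have hMz : Mseq 0 = (M₀, M₁) := Ordinal.limitRecOn_zero _ _ _
    have hMs : ∀ o, Mseq (Order.succ o) = step (Mseq o) := fun o =>
      Ordinal.limitRecOn_succ _ _ _ _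
    have hMl : ∀ o, Order.IsSuccLimit o →
        Mseq o = (⋃ γ, ⋃ _ : γ < o, (Mseq γ).1, ⋃ γ, ⋃ _ : γ < o, (Mseq γ).2) :=
      fun o ho => Ordinal.limitRecOn_limit _ _ _ _ ho
    set Λ : Ordinal.{u} := (Order.succ lam).ord with hΛdef
    have hreg : (Order.succ lam).IsRegular := Cardinal.isRegular_succ hfin
    have hΛcof : Λ.cof = Order.succ lam := hreg.cof_eq
    have hΛlim : Order.IsSuccLimit Λ := Cardinal.isSuccLimit_ord (hfin.trans (Order.le_succ lam))
    have hcardΛ : ∀ {o : Ordinal.{u}}, o < Λ → o.card ≤ lam := fun ho =>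
      Order.lt_succ_iff.1 (Cardinal.lt_ord.1 ho)
    -- main invariant
    have inv : ∀ o : Ordinal.{u}, o < Λ → Good (Mseq o) ∧
        ∀ i, i < o → C.le (Mseq i).1 (Mseq o).1 ∧ C.le (Mseq i).2 (Mseq o).2 := by
      intro o
      induction o using Ordinal.limitRecOn with
      | zero =>
        intro _
        rw [hMz]
        exact ⟨⟨h, C.le_refl h.1.1, C.le_refl h.2.1.1⟩,
          fun i hi => absurd hi (zero_le (a := i)).not_gt⟩
      | add_one o ih =>
        rw [Ordinal.add_one_eq_succ]
        intro hso
        have hoΛ : o < Λ := (Order.lt_succ o).trans hso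
        obtain ⟨hg, hmono⟩ := ih hoΛ
        have hst := hstep (Mseq o) hg
        rw [hMs o]
        refine ⟨⟨hst.1, C.le_trans hg.2.1 hst.2.1, C.le_trans hg.2.2 hst.2.2.1⟩, ?_⟩
        intro i hi
        rcases (Order.lt_succ_iff.1 hi).lt_or_eq with hio | rfl
        · exact ⟨C.le_trans (hmono i hio).1 hst.2.1, C.le_trans (hmono i hio).2 hst.2.2.1⟩
        · exact ⟨hst.2.1, hst.2.2.1⟩
      | limit o ho ih =>
        intro hoΛ
        haveI hne : Nonempty o.ToType := Ordinal.nonempty_toType_iff.2 ho.pos.ne'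
        set g1 : o.ToType → Set U := fun x => (Mseq (ordOf o x)).1 with hg1
        set g2 : o.ToType → Set U := fun x => (Mseq (ordOf o x)).2 with hg2
        have hltΛ : ∀ x : o.ToType, ordOf o x < Λ := fun x => (ordOf_lt o x).trans hoΛ
        have hih : ∀ x : o.ToType, Good (Mseq (ordOf o x)) :=
          fun x => (ih _ (ordOf_lt o x) (hltΛ x)).1
        have lmono : ∀ γ γ', γ ≤ γ' → γ' < o →
            C.le (Mseq γ).1 (Mseq γ').1 ∧ C.le (Mseq γ).2 (Mseq γ').2 := by
          intro γ γ' hle hlt'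
          rcases hle.lt_or_eq with hlt2 | rfl
          · exact (ih γ' hlt' (hlt'.trans hoΛ)).2 γ hlt2
          · have hg := (ih γ hlt' (hlt'.trans hoΛ)).1
            exact ⟨C.le_refl hg.1.1.1, C.le_refl hg.1.2.1.1⟩
        have hchain1 : ∀ x y : o.ToType, x ≤ y → C.le (g1 x) (g1 y) := fun x y hxy =>
          (lmono _ _ (ordOf_le_iff.2 hxy) (ordOf_lt o y)).1
        have hchain2 : ∀ x y : o.ToType, x ≤ y → C.le (g2 x) (g2 y) := fun x y hxy =>
          (lmono _ _ (ordOf_le_iff.2 hxy) (ordOf_lt o y)).2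
        have hcont1 : ∀ x : o.ToType, IsChainLimit x → g1 x = ⋃ j ∈ Set.Iio x, g1 j := by
          intro x hx
          have heq := congrArg Prod.fst (hMl _ (isLimit_ordOf hx))
          exact heq.trans (biUnion_ordOf o (fun γ => (Mseq γ).1) x).symm
        have hcont2 : ∀ x : o.ToType, IsChainLimit x → g2 x = ⋃ j ∈ Set.Iio x, g2 j := by
          intro x hx
          have heq := congrArg Prod.snd (hMl _ (isLimit_ordOf hx))
          exact heq.trans (biUnion_ordOf o (fun γ => (Mseq γ).2) x).symm
        have hU1 : (Mseq o).1 = ⋃ x : o.ToType, g1 x := by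
          rw [hMl o ho]
          exact (iUnion_ordOf o (fun γ => (Mseq γ).1)).symm
        have hU2 : (Mseq o).2 = ⋃ x : o.ToType, g2 x := by
          rw [hMl o ho]
          exact (iUnion_ordOf o (fun γ => (Mseq γ).2)).symm
        obtain ⟨x0⟩ := id hne
        have hmem1 : C.mem (⋃ x : o.ToType, g1 x) :=
          C.chain_union_mem g1 hne hchain1 hcont1
        have hmem2 : C.mem (⋃ x : o.ToType, g2 x) :=
          C.chain_union_mem g2 hne hchain2 hcont2
        have hcard1 : #(⋃ x : o.ToType, g1 x) = lam := by
          refine le_antisymm ?_ ?_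
          · calc #(⋃ x : o.ToType, g1 x) ≤ #o.ToType * ⨆ x, #(g1 x) :=
                Cardinal.mk_iUnion_le g1
              _ ≤ lam * lam := by
                refine mul_le_mul' ?_ (ciSup_le' fun x => le_of_eq (hih x).1.1.2)
                rw [Cardinal.mk_toType]; exact hcardΛ hoΛ
              _ = lam := Cardinal.mul_eq_self hfin
          · calc lam = #((Mseq (ordOf o x0)).1) := ((hih x0).1.1.2).symm
              _ ≤ _ := Cardinal.mk_le_mk_of_subset (Set.subset_iUnion g1 x0)
        have hcard2 : #(⋃ x : o.ToType, g2 x) = lam := by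
          refine le_antisymm ?_ ?_
          · calc #(⋃ x : o.ToType, g2 x) ≤ #o.ToType * ⨆ x, #(g2 x) :=
                Cardinal.mk_iUnion_le g2
              _ ≤ lam * lam := by
                refine mul_le_mul' ?_ (ciSup_le' fun x => le_of_eq (hih x).1.2.1.2)
                rw [Cardinal.mk_toType]; exact hcardΛ hoΛ
              _ = lam := Cardinal.mul_eq_self hfin
          · calc lam = #((Mseq (ordOf o x0)).2) := ((hih x0).1.2.1.2).symm
              _ ≤ _ := Cardinal.mk_le_mk_of_subset (Set.subset_iUnion g2 x0)
        have hleU : C.le (⋃ x : o.ToType, g1 x) (⋃ x : o.ToType, g2 x) := by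
          refine C.chain_union_le g1 _ hne hchain1 hcont1 fun x =>
            C.le_trans (hih x).1.2.2.1 (C.chain_le_union g2 hchain2 hcont2 x)
        have haU2 : a ∈ ⋃ x : o.ToType, g2 x :=
          Set.mem_iUnion.2 ⟨x0, C.subset_of_le (hih x0).2.2 h.2.2.2.1⟩
        have haU1 : a ∉ ⋃ x : o.ToType, g1 x := by
          simp only [Set.mem_iUnion, not_exists]
          exact fun x hx => (hih x).1.2.2.2.2 hx
        have hK3 : C.K3 lam (Mseq o).1 (Mseq o).2 a := by
          rw [hU1, hU2]
          exact ⟨⟨hmem1, hcard1⟩, ⟨hmem2, hcard2⟩, hleU, haU2, haU1⟩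
        refine ⟨⟨hK3, ?_, ?_⟩, ?_⟩
        · rw [hU1]
          exact C.le_trans (hih x0).2.1 (C.chain_le_union g1 hchain1 hcont1 x0)
        · rw [hU2]
          exact C.le_trans (hih x0).2.2 (C.chain_le_union g2 hchain2 hcont2 x0)
        · intro i hi
          obtain ⟨x, rfl⟩ := ordOf_surj hi
          constructor
          · rw [hU1]; exact C.chain_le_union g1 hchain1 hcont1 x
          · rw [hU2]; exact C.chain_le_union g2 hchain2 hcont2 x
    -- monotonicity as subsets
    have gsub : ∀ i j, i ≤ j → j < Λ →
        (Mseq i).1 ⊆ (Mseq j).1 ∧ (Mseq i).2 ⊆ (Mseq j).2 := by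
      intro i j hij hj
      rcases hij.lt_or_eq with hij' | rfl
      · exact ⟨C.subset_of_le ((inv j hj).2 i hij').1, C.subset_of_le ((inv j hj).2 i hij').2⟩
      · exact ⟨subset_rfl, subset_rfl⟩
    -- the new points
    have hbex : ∀ o (ho : o < Λ), ∃ b, b ∈ (Mseq (Order.succ o)).1 ∧
        b ∈ (Mseq o).2 ∧ b ∉ (Mseq o).1 := by
      intro o ho
      have hg := (inv o ho).1
      have hst := hstep (Mseq o) hg
      have hsub : (Mseq o).1 ⊆ (step (Mseq o)).1 ∩ (Mseq o).2 :=
        Set.subset_inter (C.subset_of_le hst.2.1) (C.subset_of_le hg.1.2.2.1)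
      obtain ⟨b, hb1, hb2⟩ :=
        Set.exists_of_ssubset (hsub.ssubset_of_ne fun e => hst.2.2.2 e.symm)
      rw [hMs o]
      exact ⟨b, hb1.1, hb1.2, hb2⟩
    choose b hbmem1 hbmem2 hbnot using hbex
    -- the closing function F
    have hFex : ∀ i, i < Λ → ∃ j, i < j ∧ j < Λ ∧
        (Mseq i).2 ∩ (⋃ γ, ⋃ _ : γ < Λ, (Mseq γ).1) ⊆ (Mseq j).1 := by
      intro i hi
      set T : Set U := (Mseq i).2 ∩ (⋃ γ, ⋃ _ : γ < Λ, (Mseq γ).1) with hT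
      have hchoice : ∀ x : T, ∃ γ, γ < Λ ∧ (x : U) ∈ (Mseq γ).1 := by
        intro x
        have hx2 := x.2.2
        simp only [Set.mem_iUnion] at hx2
        obtain ⟨γ, hγ, hm⟩ := hx2
        exact ⟨γ, hγ, hm⟩
      choose γf hγf1 hγf2 using hchoice
      have hTcard : #T < Λ.cof := by
        rw [hΛcof]
        refine lt_of_le_of_lt ?_ (Order.lt_succ lam)
        calc #T ≤ #((Mseq i).2) := Cardinal.mk_le_mk_of_subset Set.inter_subset_left
          _ = lam := (inv i hi).1.1.2.1.2
      have hsup : (⨆ x : T, γf x) < Λ := Ordinal.iSup_lt_ord hTcard hγf1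
      have hjΛ : Order.succ (max (⨆ x : T, γf x) i) < Λ := hΛlim.succ_lt (max_lt hsup hi)
      refine ⟨Order.succ (max (⨆ x : T, γf x) i),
        (le_max_right _ i).trans_lt (Order.lt_succ _), hjΛ, ?_⟩
      intro u hu
      have hγle : γf ⟨u, hu⟩ ≤ Order.succ (max (⨆ x : T, γf x) i) :=
        (((Ordinal.le_iSup γf ⟨u, hu⟩).trans (le_max_left _ i)).trans
          (Order.le_succ _))
      exact (gsub _ _ hγle hjΛ).1 (hγf2 ⟨u, hu⟩)
    choose F hF1 hF2 hF3 using hFex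
    -- the ω-sequence of closure points
    set d : ℕ → {x : Ordinal.{u} // x < Λ} := fun n =>
      Nat.rec ⟨0, hΛlim.pos⟩ (fun _ p => ⟨F p.1 p.2, hF2 p.1 p.2⟩) n with hd
    have hdsucc : ∀ n, (d (n + 1)).1 = F (d n).1 (d n).2 := fun n => rfl
    have hdlt : ∀ n, (d n).1 < (d (n + 1)).1 := fun n => hF1 _ _
    have hδΛ : (⨆ n, ((d n : Ordinal.{u}))) < Λ := by
      refine Ordinal.iSup_lt_ord_lift (f := fun n => ((d n : Ordinal.{u}))) ?_ fun n => (d n).2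
      rw [hΛcof, Cardinal.mk_nat, Cardinal.lift_aleph0]
      exact hfin.trans_lt (Order.lt_succ lam)
    have hle_δ : ∀ n, ((d n : Ordinal.{u})) ≤ ⨆ n, ((d n : Ordinal.{u})) := fun n =>
      Ordinal.le_iSup (fun n => ((d n : Ordinal.{u}))) n
    set δ : Ordinal.{u} := ⨆ n, ((d n : Ordinal.{u})) with hδdef
    have hδlim : Order.IsSuccLimit δ := by
      rw [Ordinal.isSuccLimit_iff, Order.isSuccPrelimit_iff_succ_lt]
      constructor
      · have h01 : (0 : Ordinal) < (d 1).1 := hdlt 0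
        exact (h01.trans_le (hle_δ 1)).ne'
      · intro γ hγ
        rw [hδdef] at hγ
        obtain ⟨n, hn⟩ := Ordinal.lt_iSup_iff.1 hγ
        exact (Order.succ_le_of_lt hn).trans_lt ((hdlt n).trans_le (hle_δ (n + 1)))
    -- the contradiction
    have hb2' : b δ hδΛ ∈ ⋃ γ, ⋃ _ : γ < δ, (Mseq γ).2 := by
      have hx := hbmem2 δ hδΛ
      rwa [hMl δ hδlim] at hx
    simp only [Set.mem_iUnion] at hb2'
    obtain ⟨γ, hγδ, hγmem⟩ := hb2'
    rw [hδdef] at hγδ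
    obtain ⟨n, hn⟩ := Ordinal.lt_iSup_iff.1 hγδ
    have hbdn : b δ hδΛ ∈ (Mseq (d n).1).2 := (gsub γ (d n).1 hn.le (d n).2).2 hγmem
    have hbU : b δ hδΛ ∈ ⋃ γ, ⋃ _ : γ < Λ, (Mseq γ).1 := by
      simp only [Set.mem_iUnion]
      exact ⟨Order.succ δ, hΛlim.succ_lt hδΛ, hbmem1 δ hδΛ⟩
    have hbF : b δ hδΛ ∈ (Mseq (d (n + 1)).1).1 := hF3 (d n).1 (d n).2 ⟨hbdn, hbU⟩
    exact hbnot δ hδΛ ((gsub (d (n + 1)).1 δ (hle_δ (n + 1)) hδΛ).1 hbF)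

end AEC
end

section
/- Let K be an abstract elementary class. If (M_{0,α}, M_{1,α}, a)_{α < δ} is an increasing sequence of reduced triples in K³_λ with δ < λ⁺ a limit ordinal, then (⋃_{α<δ} M_{0,α}, ⋃_{α<δ} M_{1,α}, a) is a reduced triple in K³_λ. -/
universe u

open Cardinal Set

namespace AEC

variable {U : Type u} (C : AEC U)

theorem union_chain_facts : ∀ δ : Ordinal.{u}, Order.IsSuccLimit δ →
    ∀ M : Ordinal.{u} → Set U,
    (∀ α β, α ≤ β → β < δ → C.le (M α) (M β)) →
    (∀ β < δ, C.le (M β) (⋃ α ∈ Set.Iio δ, M α)) ∧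
      C.mem (⋃ α ∈ Set.Iio δ, M α) ∧
      ∀ P, (∀ β < δ, C.le (M β) P) → C.le (⋃ α ∈ Set.Iio δ, M α) P := by
  intro δ
  induction δ using Ordinal.induction with
  | h δ IH =>
  intro hlim M hmono
  classical
  have hsucc : ∀ β, β < δ → β + 1 < δ := fun β h => by
    rw [Ordinal.add_one_eq_succ]; exact hlim.succ_lt h
  have hle1 : ∀ β : Ordinal.{u}, β ≤ β + 1 := fun β => by rw [Ordinal.add_one_eq_succ]; exact Order.le_succ β
  have hnotlim : ∀ β : Ordinal.{u}, ¬ Order.IsSuccLimit (β + 1) := fun β h => by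
    rw [Ordinal.add_one_eq_succ] at h; exact Order.not_isSuccLimit_succ β h
  set e := (Ordinal.ToType.mk (o := δ)) with he
  set ord : δ.ToType → Ordinal.{u} := fun i => ((e.symm i : Set.Iio δ) : Ordinal) with hord_def
  have hord : ∀ i, ord i < δ := fun i => (e.symm i).2
  have hordlt : ∀ i j : δ.ToType, i < j ↔ ord i < ord j := fun i j =>
    ⟨fun h => Subtype.coe_lt_coe.2 (e.symm.lt_iff_lt.2 h),
     fun h => e.symm.lt_iff_lt.1 (Subtype.coe_lt_coe.1 h)⟩
  have ord_idx : ∀ β (h : β < δ), ord (e ⟨β, h⟩) = β := fun β h => by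
    simp [hord_def]
  set N : δ.ToType → Set U :=
    fun i => if Order.IsSuccLimit (ord i) then ⋃ β ∈ Set.Iio (ord i), M β else M (ord i) with hN
  have IH' : ∀ ι : Ordinal.{u}, ι < δ → Order.IsSuccLimit ι →
      (∀ β < ι, C.le (M β) (⋃ α ∈ Set.Iio ι, M α)) ∧
      C.mem (⋃ α ∈ Set.Iio ι, M α) ∧
      ∀ P, (∀ β < ι, C.le (M β) P) → C.le (⋃ α ∈ Set.Iio ι, M α) P :=
    fun ι hι hl => IH ι hι hl M (fun α β hab hb => hmono α β hab (hb.trans hι))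
  have memM : ∀ β, β < δ → C.mem (M β) := fun β h =>
    C.le_mem_left (hmono β (β + 1) (hle1 β) (hsucc β h))
  have memN : ∀ i, C.mem (N i) := by
    intro i
    by_cases hl : Order.IsSuccLimit (ord i)
    · simp only [hN, if_pos hl]; exact (IH' (ord i) (hord i) hl).2.1
    · simp only [hN, if_neg hl]; exact memM _ (hord i)
  have leMN : ∀ (i : δ.ToType) (β : Ordinal.{u}), β < ord i → C.le (M β) (N i) := by
    intro i β hβ
    by_cases hl : Order.IsSuccLimit (ord i)
    · simp only [hN, if_pos hl]; exact (IH' (ord i) (hord i) hl).1 β hβ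
    · simp only [hN, if_neg hl]; exact hmono β (ord i) hβ.le (hord i)
  have leNP : ∀ (i : δ.ToType) (P : Set U),
      (∀ β < δ, C.le (M β) P) → C.le (N i) P := by
    intro i P hP
    by_cases hl : Order.IsSuccLimit (ord i)
    · simp only [hN, if_pos hl]
      exact (IH' (ord i) (hord i) hl).2.2 P (fun β hβ => hP β (hβ.trans (hord i)))
    · simp only [hN, if_neg hl]; exact hP _ (hord i)
  have leNN : ∀ i j, i ≤ j → C.le (N i) (N j) := by
    intro i j hij
    rcases eq_or_lt_of_le hij with rfl | hij
    · exact C.le_refl (memN i)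
    have hoij : ord i < ord j := (hordlt i j).1 hij
    by_cases hi : Order.IsSuccLimit (ord i)
    · simp only [hN, if_pos hi]
      exact (IH' (ord i) (hord i) hi).2.2 _
        (fun β hβ => leMN j β (hβ.trans hoij))
    · simp only [hN, if_neg hi]
      exact leMN j (ord i) hoij
  have hcont : ∀ i, IsChainLimit i → N i = ⋃ j ∈ Set.Iio i, N j := by
    intro i hi
    have hil : Order.IsSuccLimit (ord i) := by
      rw [Ordinal.isSuccLimit_iff]; refine ⟨?_, Order.isSuccPrelimit_of_succ_lt ?_⟩
      · obtain ⟨j, hj⟩ := hi.1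
        exact fun h0 => not_lt_zero (h0 ▸ (hordlt j i).1 hj)
      · intro β hβ
        obtain ⟨k, hjk, hki⟩ := hi.2 (e ⟨β, hβ.trans (hord i)⟩)
          (by rw [hordlt, ord_idx]; exact hβ)
        have h1 : β < ord k := by
          rw [← ord_idx β (hβ.trans (hord i)), ← hordlt]; exact hjk
        exact lt_of_le_of_lt (Order.succ_le_of_lt h1) ((hordlt k i).1 hki)
    simp only [hN, if_pos hil]
    apply Set.Subset.antisymm
    · intro x hx
      simp only [Set.mem_iUnion, Set.mem_Iio] at hx ⊢
      obtain ⟨β, hβ, hxβ⟩ := hx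
      have hβ1 : β + 1 < ord i := by
        rw [Ordinal.add_one_eq_succ]; exact hil.succ_lt hβ
      refine ⟨e ⟨β + 1, hβ1.trans (hord i)⟩, ?_, ?_⟩
      · rw [hordlt, ord_idx]; exact hβ1
      · rw [ord_idx, if_neg (hnotlim β)]
        exact C.subset_of_le (hmono β (β + 1) (hle1 β) (hβ1.trans (hord i))) hxβ
    · intro x hx
      simp only [Set.mem_iUnion, Set.mem_Iio] at hx ⊢
      obtain ⟨j, hj, hxj⟩ := hx
      have hoj : ord j < ord i := (hordlt j i).1 hj
      by_cases hl : Order.IsSuccLimit (ord j)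
      · simp only [hN, if_pos hl, Set.mem_iUnion, Set.mem_Iio] at hxj
        obtain ⟨β, hβ, hxβ⟩ := hxj
        exact ⟨β, hβ.trans hoj, hxβ⟩
      · simp only [hN, if_neg hl] at hxj
        exact ⟨ord j, hoj, hxj⟩
  have hne : Nonempty δ.ToType := Ordinal.nonempty_toType_iff.2 hlim.pos.ne'
  have hUeq : (⋃ i, N i) = ⋃ α ∈ Set.Iio δ, M α := by
    apply Set.Subset.antisymm
    · intro x hx
      simp only [Set.mem_iUnion, Set.mem_Iio] at hx ⊢
      obtain ⟨i, hxi⟩ := hx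
      by_cases hl : Order.IsSuccLimit (ord i)
      · simp only [hN, if_pos hl, Set.mem_iUnion, Set.mem_Iio] at hxi
        obtain ⟨β, hβ, hxβ⟩ := hxi
        exact ⟨β, hβ.trans (hord i), hxβ⟩
      · simp only [hN, if_neg hl] at hxi
        exact ⟨ord i, hord i, hxi⟩
    · intro x hx
      simp only [Set.mem_iUnion, Set.mem_Iio] at hx ⊢
      obtain ⟨β, hβ, hxβ⟩ := hx
      refine ⟨e ⟨β + 1, hsucc β hβ⟩, ?_⟩
      have : N (e ⟨β + 1, hsucc β hβ⟩) = M (β + 1) := by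
        simp only [hN, ord_idx, if_neg (hnotlim β)]
      rw [this]
      exact C.subset_of_le (hmono β (β + 1) (hle1 β) (hsucc β hβ)) hxβ
  refine ⟨?_, ?_, ?_⟩
  · intro β hβ
    have h1 : C.le (M β) (N (e ⟨β + 1, hsucc β hβ⟩)) := by
      have h2 : N (e ⟨β + 1, hsucc β hβ⟩) = M (β + 1) := by
        simp only [hN, ord_idx, if_neg (hnotlim β)]
      rw [h2]; exact hmono β (β + 1) (hle1 β) (hsucc β hβ)
    exact C.le_trans h1 (hUeq ▸ C.chain_le_union N leNN hcont _)
  · exact hUeq ▸ C.chain_union_mem N hne leNN hcont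
  · intro P hP
    exact hUeq ▸ C.chain_union_le N P hne leNN hcont (fun i => leNP i P hP)

/-- Fact 2.4(2)(c): the union of an increasing sequence of reduced triples of
`K³_lam`, indexed by a limit ordinal `δ < lam⁺`, is a reduced triple. -/
theorem reduced_union (lam : Cardinal.{u}) (hLS : C.LS ≤ lam)
    (δ : Ordinal.{u}) (hlim : Order.IsSuccLimit δ) (hδ : δ < (Order.succ lam).ord)
    (M0 M1 : Ordinal.{u} → Set U) (a : U)
    (hred : ∀ α < δ, C.Reduced lam (M0 α) (M1 α) a)
    (hmono0 : ∀ α β, α ≤ β → β < δ → C.le (M0 α) (M0 β))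
    (hmono1 : ∀ α β, α ≤ β → β < δ → C.le (M1 α) (M1 β)) :
    C.Reduced lam (⋃ α ∈ Set.Iio δ, M0 α) (⋃ α ∈ Set.Iio δ, M1 α) a := by
  have hw : ℵ₀ ≤ lam := C.aleph0_le_LS.trans hLS
  have hδcard : δ.card ≤ lam := Order.lt_succ_iff.1 (Cardinal.lt_ord.1 hδ)
  have F0 := C.union_chain_facts δ hlim M0 hmono0
  have F1 := C.union_chain_facts δ hlim M1 hmono1
  have hK3 : ∀ α < δ, C.K3 lam (M0 α) (M1 α) a := fun α h => (hred α h).1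
  have hcard : ∀ (M : Ordinal.{u} → Set U), (∀ β < δ, #(M β) = lam) →
      #(⋃ α ∈ Set.Iio δ, M α) = lam := by
    intro M hM
    apply le_antisymm
    · have heq : (⋃ α ∈ Set.Iio δ, M α) =
          ⋃ i : δ.ToType, M (((Ordinal.ToType.mk (o := δ))).symm i : Set.Iio δ) := by
        ext x
        simp only [Set.mem_iUnion, Set.mem_Iio]
        constructor
        · rintro ⟨β, hβ, hx⟩
          exact ⟨(Ordinal.ToType.mk (o := δ)) ⟨β, hβ⟩, by simpa using hx⟩
        · rintro ⟨i, hx⟩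
          exact ⟨_, (((Ordinal.ToType.mk (o := δ))).symm i).2, hx⟩
      rw [heq]
      exact (Cardinal.mk_iUnion_le _).trans ((mul_le_mul'
        (by rw [Cardinal.mk_toType]; exact hδcard)
        (ciSup_le' fun i => (hM _ (((Ordinal.ToType.mk (o := δ))).symm i).2).le)).trans_eq
        (Cardinal.mul_eq_self hw))
    · rw [← hM 0 hlim.pos]
      exact Cardinal.mk_le_mk_of_subset (Set.subset_biUnion_of_mem hlim.pos)
  have hle01 : C.le (⋃ α ∈ Set.Iio δ, M0 α) (⋃ α ∈ Set.Iio δ, M1 α) :=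
    F0.2.2 _ (fun β hβ => C.le_trans (hK3 β hβ).2.2.1 (F1.1 β hβ))
  refine ⟨⟨⟨F0.2.1, hcard M0 (fun β hβ => (hK3 β hβ).1.2)⟩,
      ⟨F1.2.1, hcard M1 (fun β hβ => (hK3 β hβ).2.1.2)⟩, hle01, ?_, ?_⟩, ?_⟩
  · exact Set.mem_biUnion hlim.pos (hK3 0 hlim.pos).2.2.2.1
  · intro h
    obtain ⟨β, hβ, hx⟩ := Set.mem_iUnion₂.1 h
    exact (hK3 β hβ).2.2.2.2 hx
  · intro M0' M1' h3 hl0 hl1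
    apply Set.Subset.antisymm
    · rintro x ⟨hx0, hx1⟩
      obtain ⟨β, hβ, hxβ⟩ := Set.mem_iUnion₂.1 hx1
      have heq := (hred β hβ).2 M0' M1' h3 (C.le_trans (F0.1 β hβ) hl0)
        (C.le_trans (F1.1 β hβ) hl1)
      exact Set.mem_biUnion hβ (heq ▸ (⟨hx0, hxβ⟩ : x ∈ M0' ∩ M1 β))
    · intro x hx
      exact ⟨C.subset_of_le hl0 hx, C.subset_of_le hle01 hx⟩

end AEC
end
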